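/- Let p ≥ 1 and let B and C be p×p integer matrices, where B is upper triangular with diagonal entries b₁, …, b_p, and C is in Smith normal form with diagonal entries c₁, …, c_p. Then there exists a p×p integer matrix N such that B + C·N is invertible over ℤ if and only if det B ≡ 1 or −1 modulo c₁ and gcd(b_j, c_j) = 1 for every j ∈ {1, …, p}. -/

import Mathlib

open Matrix Finset


/-- Template matrix: diagonal `d`, subdiagonal `s` (entry `(i, i-1) = s i`),
and a "corner" term `t` at position `(0, q)`. -/
def tmpl (n : ℕ) (d s : ℕ → ℤ) (t : ℤ) (q : ℕ) : Matrix (Fin n) (Fin n) ℤ :=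
  Matrix.of fun i j : Fin n =>
    (if (i : ℕ) = (j : ℕ) then d i else 0) + (if (i : ℕ) = (j : ℕ) + 1 then s i else 0)
      + (if (i : ℕ) = 0 ∧ (j : ℕ) = q then t else 0)

lemma prod_shift_Icc (s : ℕ → ℤ) (a b : ℕ) :
    (∏ i ∈ Icc a b, s (i + 1)) = ∏ i ∈ Icc (a + 1) (b + 1), s i := by
  rw [← Finset.map_add_right_Icc a b 1, Finset.prod_map]; rfl

lemma prod_shift_Ioo (s : ℕ → ℤ) (a b : ℕ) :
    (∏ i ∈ Ioo a b, s (i + 1)) = ∏ i ∈ Ioo (a + 1) (b + 1), s i := by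
  rw [← Finset.map_add_right_Ioo a b 1, Finset.prod_map]; rfl

lemma prod_Ioo_zero (d : ℕ → ℤ) (k : ℕ) :
    (∏ i ∈ Ioo 0 (k + 1), d i) = ∏ i ∈ range k, d (i + 1) := by
  rw [← Finset.Ico_add_one_left_eq_Ioo, Finset.prod_Ico_eq_prod_range]
  simp [add_comm]

theorem det_tmpl : ∀ (n : ℕ), 0 < n → ∀ (d s : ℕ → ℤ) (t : ℤ) (q : ℕ), q < n →
    (tmpl n d s t q).det
      = ∏ i ∈ range n, d i
        + (-1) ^ q * t * (∏ i ∈ Icc 1 q, s i) * (∏ i ∈ Ioo q n, d i) := by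
  intro n
  induction n with
  | zero => omega
  | succ m ih =>
    intro _ d s t q hq
    match m, ih with
    | 0, _ =>
      interval_cases q
      simp [tmpl, Matrix.det_fin_one, show (Ioo 0 1 : Finset ℕ) = ∅ from rfl]
    | Nat.succ k, ih =>
      show (tmpl (k+2) d s t q).det = ∏ i ∈ range (k+2), d i
        + (-1)^q * t * (∏ i ∈ Icc 1 q, s i) * (∏ i ∈ Ioo q (k+2), d i)
      have hdet := Matrix.det_succ_column_zero (tmpl (k + 2) d s t q)
      rw [Fin.sum_univ_succ, Fin.sum_univ_succ] at hdet
      have hzero : (∑ i : Fin k, (-1:ℤ) ^ ((i.succ.succ : Fin (k+2)) : ℕ)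
          * tmpl (k + 2) d s t q i.succ.succ 0
          * ((tmpl (k + 2) d s t q).submatrix i.succ.succ.succAbove Fin.succ).det) = 0 :=
        Finset.sum_eq_zero fun i _ => by
          have h0 : tmpl (k + 2) d s t q i.succ.succ 0 = 0 := by simp [tmpl]
          rw [h0]; ring
      rw [hzero, add_zero] at hdet
      -- the first minor is pure bidiagonal
      have hm0 : (tmpl (k + 2) d s t q).submatrix (Fin.succAbove 0) Fin.succ
          = tmpl (k + 1) (fun n => d (n + 1)) (fun n => s (n + 1)) 0 0 := by
        ext i j
        simp only [Matrix.submatrix_apply, Fin.succAbove_zero, tmpl, Matrix.of_apply,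
          Fin.val_succ]
        have e1 : ((i:ℕ)+1 = (j:ℕ)+1) ↔ ((i:ℕ)=(j:ℕ)) := by omega
        have e2 : ((i:ℕ)+1 = (j:ℕ)+1+1) ↔ ((i:ℕ)=(j:ℕ)+1) := by omega
        rw [if_congr e1 rfl rfl, if_congr e2 rfl rfl]
        simp
      have h0det : ((tmpl (k + 2) d s t q).submatrix (Fin.succAbove 0) Fin.succ).det
          = ∏ i ∈ range (k + 1), d (i + 1) := by
        rw [hm0, ih (by omega) _ _ _ 0 (by omega)]
        simp
      rw [h0det] at hdet
      have hA10 : tmpl (k + 2) d s t q (Fin.succ 0) 0 = s 1 := by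
        simp [tmpl, Fin.succ_zero_eq_one]
      rw [hA10] at hdet
      rcases q with _ | q'
      · -- q = 0
        have hA00 : tmpl (k + 2) d s t 0 0 0 = d 0 + t := by simp [tmpl]
        have hrow0 : ∀ j, ((tmpl (k + 2) d s t 0).submatrix (Fin.succ 0).succAbove Fin.succ)
            (0 : Fin (k+1)) j = 0 := by
          intro j
          have : (Fin.succ (0 : Fin (k+1))).succAbove (0 : Fin (k+1)) = 0 := by
            rw [Fin.succ_zero_eq_one]; exact Fin.one_succAbove_zero
          simp [Matrix.submatrix_apply, this, tmpl]
        rw [Matrix.det_eq_zero_of_row_eq_zero 0 hrow0, hA00] at hdet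
        rw [hdet, Finset.prod_range_succ' d (k+1), prod_Ioo_zero d (k+1)]
        simp; ring
      · -- q = q' + 1
        have hA00 : tmpl (k + 2) d s t (q'+1) 0 0 = d 0 := by
          simp [tmpl]
        rw [hA00] at hdet
        have hm1 : (tmpl (k + 2) d s t (q'+1)).submatrix (Fin.succ 0).succAbove Fin.succ
            = tmpl (k + 1) (fun n => if n = 0 then 0 else d (n + 1)) (fun n => s (n + 1)) t q' := by
          ext i j
          induction i using Fin.cases with
          | zero =>
            have hsa : (Fin.succ (0 : Fin (k+1))).succAbove (0 : Fin (k+1)) = 0 := by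
              rw [Fin.succ_zero_eq_one]; exact Fin.one_succAbove_zero
            simp only [Matrix.submatrix_apply, hsa, tmpl, Matrix.of_apply, Fin.val_succ,
              Fin.val_zero]
            have e1 : ¬((0:ℕ) = (j:ℕ)+1) := by omega
            have e2 : ¬((0:ℕ) = (j:ℕ)+1+1) := by omega
            have e5 : ((j:ℕ)+1 = q'+1) ↔ ((j:ℕ) = q') := by omega
            simp [e5, e1, e2]
          | succ i =>
            have hsa : (Fin.succ (0 : Fin (k+1))).succAbove i.succ = i.succ.succ := by
              rw [Fin.succ_zero_eq_one]; exact Fin.one_succAbove_succ i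
            simp only [Matrix.submatrix_apply, hsa, tmpl, Matrix.of_apply, Fin.val_succ]
            have e1 : ((i:ℕ)+1+1 = (j:ℕ)+1) ↔ ((i:ℕ)+1 = (j:ℕ)) := by omega
            have e2 : ((i:ℕ)+1+1 = (j:ℕ)+1+1) ↔ ((i:ℕ)+1 = (j:ℕ)+1) := by omega
            rw [if_congr e1 rfl rfl, if_congr e2 rfl rfl]
            simp
        rw [hm1, ih (by omega) _ _ _ q' (by omega)] at hdet
        have hz : (∏ i ∈ range (k+1), (if i = 0 then 0 else d (i + 1))) = 0 :=
          Finset.prod_eq_zero (i := 0) (Finset.mem_range.2 (by omega)) (by simp)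
        have hIcc : (∏ i ∈ Icc 1 q', (fun n => s (n+1)) i) = ∏ i ∈ Icc 2 (q'+1), s i :=
          prod_shift_Icc s 1 q'
        have hIoo : (∏ i ∈ Ioo q' (k+1), (if i = 0 then 0 else d (i + 1)))
            = ∏ i ∈ Ioo (q'+1) (k+2), d i := by
          have h1 : (∏ i ∈ Ioo q' (k+1), (if i = 0 then 0 else d (i + 1)))
              = ∏ i ∈ Ioo q' (k+1), d (i+1) := by
            apply Finset.prod_congr rfl
            intro i hi
            have := Finset.mem_Ioo.1 hi
            exact if_neg (by omega)
          rw [h1, prod_shift_Ioo]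
        rw [hz, hIcc, hIoo] at hdet
        have hins : (∏ i ∈ Icc 1 (q'+1), s i) = s 1 * ∏ i ∈ Icc 2 (q'+1), s i := by
          have : Icc 1 (q'+1) = insert 1 (Icc 2 (q'+1)) := by
            ext x; simp [Finset.mem_Icc, Finset.mem_insert]; omega
          rw [this, Finset.prod_insert (by simp)]
        rw [hdet, Finset.prod_range_succ' d (k+1), hins]
        simp only [Fin.val_zero, Fin.val_succ, pow_zero, pow_one, Nat.zero_add, zero_add]
        ring

lemma intCast_zmod_eq_iff (a b m : ℤ) : ((a : ZMod m.natAbs) = b) ↔ a ≡ b [ZMOD m] := by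
  rw [ZMod.intCast_eq_intCast_iff]
  constructor
  · intro h
    exact (Int.modEq_iff_dvd.2 (Int.natAbs_dvd.1 (Int.modEq_iff_dvd.1 h)))
  · intro h
    exact (Int.modEq_iff_dvd.2 (Int.natAbs_dvd.2 (Int.modEq_iff_dvd.1 h)))

lemma isUnit_intCast_zmod_iff (a m : ℤ) : IsUnit ((a : ZMod m.natAbs)) ↔ IsCoprime a m := by
  constructor
  · rintro ⟨u, hu⟩
    obtain ⟨w, hw⟩ := ZMod.intCast_surjective ((u⁻¹ : (ZMod m.natAbs)ˣ) : ZMod m.natAbs)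
    have h1 : ((a * w - 1 : ℤ) : ZMod m.natAbs) = 0 := by
      push_cast
      rw [hw, ← hu]
      simp
    rw [ZMod.intCast_zmod_eq_zero_iff_dvd] at h1
    have h2 : m ∣ a * w - 1 := Int.natAbs_dvd.1 h1
    obtain ⟨k, hk⟩ := h2
    exact ⟨w, -k, by linarith⟩
  · rintro ⟨u, v, huv⟩
    have : ((u : ZMod m.natAbs)) * a = 1 := by
      have h0 : ((m : ℤ) : ZMod m.natAbs) = 0 := by
        rw [ZMod.intCast_zmod_eq_zero_iff_dvd]
        exact Int.natAbs_dvd.2 dvd_rfl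
      have := congrArg (fun x : ℤ => (x : ZMod m.natAbs)) huv
      push_cast at this
      rw [h0] at this
      simpa using this
    exact IsUnit.of_mul_eq_one _ (by rw [mul_comm] at this; exact this)

lemma gcd_eq_one_iff_isUnit_zmod (a m : ℤ) :
    Int.gcd a m = 1 ↔ IsUnit ((a : ZMod m.natAbs)) := by
  rw [isUnit_intCast_zmod_iff, Int.isCoprime_iff_gcd_eq_one]

-- lifting units along divisibility
lemma exists_lift_coprime (b c C : ℤ) (h1 : Int.gcd b c = 1) (hdvd : c ∣ C) (hC : C ≠ 0) :
    ∃ b' : ℤ, b' ≡ b [ZMOD c] ∧ Int.gcd b' C = 1 := by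
  have hc : c ≠ 0 := by rintro rfl; exact hC (zero_dvd_iff.1 hdvd)
  have hna : c.natAbs ∣ C.natAbs := Int.natAbs_dvd_natAbs.2 hdvd
  haveI : NeZero C.natAbs := ⟨by simpa using hC⟩
  have hu : IsUnit ((b : ZMod c.natAbs)) := (gcd_eq_one_iff_isUnit_zmod b c).1 h1
  obtain ⟨u, hu'⟩ := hu
  obtain ⟨v, hv⟩ := ZMod.unitsMap_surjective hna u
  obtain ⟨w, hw⟩ := ZMod.intCast_surjective ((v : (ZMod C.natAbs)ˣ) : ZMod C.natAbs)
  refine ⟨w, ?_, ?_⟩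
  · rw [← intCast_zmod_eq_iff]
    have : ZMod.unitsMap hna v = u := hv
    have h2 : (ZMod.castHom hna (ZMod c.natAbs)) ((v : (ZMod C.natAbs)ˣ) : ZMod C.natAbs)
        = ((u : (ZMod c.natAbs)ˣ) : ZMod c.natAbs) := by
      rw [← this]
      rfl
    rw [← hw] at h2
    rw [← hu', ← h2, map_intCast]
  · rw [gcd_eq_one_iff_isUnit_zmod, hw]
    exact v.isUnit

section Forward
variable {p : ℕ}

lemma CN_entry (C N : Matrix (Fin p) (Fin p) ℤ)
    (hCdiag : ∀ i j : Fin p, i ≠ j → C i j = 0) (i j : Fin p) :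
    (C * N) i j = C i i * N i j := by
  rw [Matrix.mul_apply]
  rw [Finset.sum_eq_single i]
  · intro k _ hk
    rw [hCdiag i k (Ne.symm hk), zero_mul]
  · intro h; exact absurd (Finset.mem_univ i) h

lemma fwd_det_modEq (B C N : Matrix (Fin p) (Fin p) ℤ)
    (hCdiag : ∀ i j : Fin p, i ≠ j → C i j = 0)
    (m : ℤ) (hm : ∀ i : Fin p, m ∣ C i i) :
    B.det ≡ (B + C * N).det [ZMOD m] := by
  rw [← intCast_zmod_eq_iff]
  have h1 : B.map (Int.cast : ℤ → ZMod m.natAbs) = (B + C * N).map Int.cast := by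
    ext i j
    simp only [Matrix.map_apply, Matrix.add_apply]
    rw [CN_entry C N hCdiag]
    obtain ⟨k, hk⟩ := hm i
    rw [hk]
    push_cast
    rw [show ((m : ℤ) : ZMod m.natAbs) = 0 from by
      rw [ZMod.intCast_zmod_eq_zero_iff_dvd]; exact Int.natAbs_dvd.2 dvd_rfl]
    ring
  have e1 := RingHom.map_det (Int.castRingHom (ZMod m.natAbs)) B
  have e2 := RingHom.map_det (Int.castRingHom (ZMod m.natAbs)) (B + C * N)
  rw [RingHom.mapMatrix_apply, Int.coe_castRingHom] at e1 e2
  show (fun x : ℤ => (x : ZMod m.natAbs)) B.det = (fun x : ℤ => (x : ZMod m.natAbs)) (B + C * N).det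
  rw [e1, e2]
  show (B.map fun x : ℤ => (x : ZMod m.natAbs)).det = _
  rw [h1]

lemma fwd_gcd (B C N : Matrix (Fin p) (Fin p) ℤ)
    (hB : ∀ i j : Fin p, j < i → B i j = 0)
    (hCdiag : ∀ i j : Fin p, i ≠ j → C i j = 0)
    (hchain : ∀ i j : Fin p, i ≤ j → C i i ∣ C j j)
    (hN : IsUnit (B + C * N)) (j : Fin p) :
    Int.gcd (B j j) (C j j) = 1 := by
  set n := (C j j).natAbs
  rw [gcd_eq_one_iff_isUnit_zmod]
  set f := Int.castRingHom (ZMod n)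
  have hcast : ∀ i : Fin p, j ≤ i → ((C i i : ZMod n)) = 0 := by
    intro i hi
    rw [ZMod.intCast_zmod_eq_zero_iff_dvd]
    exact Int.natAbs_dvd.2 (hchain j i hi)
  set U : Matrix (Fin p) (Fin p) (ZMod n) := (B + C * N).map (Int.cast : ℤ → ZMod n) with hU
  have hUnit : IsUnit U := by
    have := hN.map f.mapMatrix
    exact this
  obtain ⟨u, hu⟩ := hUnit
  set V : Matrix (Fin p) (Fin p) (ZMod n) := ↑u⁻¹ with hV
  have hUV : U * V = 1 := by rw [← hu]; exact u.mul_inv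
  -- U's entries in rows ≥ j
  have hUentry : ∀ i k : Fin p, j ≤ i → U i k = (B i k : ZMod n) := by
    intro i k hi
    simp only [hU, Matrix.map_apply, Matrix.add_apply]
    rw [CN_entry C N hCdiag]
    push_cast
    rw [hcast i hi]
    ring
  set W : Matrix (Fin p) (Fin p) (ZMod n) :=
    Matrix.of (fun i k => if j ≤ i then U i k else (if i = k then 1 else 0)) with hW
  set V2 : Matrix (Fin p) (Fin p) (ZMod n) :=
    Matrix.of (fun k i => if j ≤ i then V k i else (if k = i then 1 else 0)) with hV2
  have hrowU : ∀ i k : Fin p, j ≤ i → k < i → U i k = 0 := by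
    intro i k hji hki
    rw [hUentry i k hji, hB i k hki, Int.cast_zero]
  -- W * V2 is upper triangular with unit diagonal
  have hprod : ∀ a b : Fin p, (W * V2) a b
      = if j ≤ a then (if j ≤ b then (if a = b then 1 else 0) else U a b)
        else (if j ≤ b then V a b else (if a = b then 1 else 0)) := by
    intro a b
    rw [Matrix.mul_apply]
    by_cases hb : j ≤ b
    · by_cases ha : j ≤ a
      · have : ∀ k, W a k * V2 k b = U a k * V k b := by
          intro k; simp [hW, hV2, ha, hb]
        rw [Finset.sum_congr rfl (fun k _ => this k)]
        have := congrFun (congrFun hUV a) b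
        rw [Matrix.mul_apply] at this
        rw [this]
        simp [Matrix.one_apply, ha, hb]
      · have : ∀ k, W a k * V2 k b = (if a = k then 1 else 0) * V k b := by
          intro k; simp [hW, hV2, ha, hb]
        rw [Finset.sum_congr rfl (fun k _ => this k)]
        simp [ha, hb, Finset.sum_ite_eq]
    · have : ∀ k, W a k * V2 k b = W a k * (if k = b then 1 else 0) := by
        intro k; simp [hW, hV2, hb]
      rw [Finset.sum_congr rfl (fun k _ => this k)]
      rw [Finset.sum_eq_single b]
      · by_cases ha : j ≤ a <;> simp [hW, ha, hb]
      · intro k _ hk; simp [hk]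
      · intro h; exact absurd (Finset.mem_univ b) h
  have hdet1 : (W * V2).det = 1 := by
    have htri : (W * V2).BlockTriangular id := by
      intro a b hab
      simp only [id_eq] at hab
      rw [hprod a b]
      by_cases ha : j ≤ a
      · by_cases hb' : j ≤ b
        · simp [ha, hb', hab.ne']
        · simp only [ha, hb', if_true, if_false]
          exact hrowU a b ha hab
      · have hb' : ¬ j ≤ b := fun h => ha (h.trans hab.le)
        simp [ha, hb', hab.ne']
    rw [Matrix.det_of_upperTriangular htri]
    apply Finset.prod_eq_one
    intro a _
    rw [hprod a a]
    by_cases ha : j ≤ a <;> simp [ha]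
  rw [Matrix.det_mul] at hdet1
  have hWt : W.BlockTriangular id := by
    intro a b hab
    simp only [id_eq] at hab
    by_cases ha : j ≤ a
    · simp only [hW, Matrix.of_apply, ha, if_true]; exact hrowU a b ha hab
    · simp [hW, ha, hab.ne']
  have hdetW : W.det = ∏ i, (if j ≤ i then ((B i i : ZMod n)) else 1) := by
    rw [Matrix.det_of_upperTriangular hWt]
    apply Finset.prod_congr rfl
    intro i _
    by_cases hi : j ≤ i
    · simp only [hW, Matrix.of_apply, hi, if_true]; exact hUentry i i hi
    · simp [hW, hi]
  have hunit : IsUnit (∏ i, (if j ≤ i then ((B i i : ZMod n)) else 1)) := by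
    rw [← hdetW]; exact IsUnit.of_mul_eq_one _ hdet1
  have hdvd : ((B j j : ZMod n)) ∣ ∏ i, (if j ≤ i then ((B i i : ZMod n)) else 1) := by
    have := Finset.dvd_prod_of_mem (fun i => if j ≤ i then ((B i i : ZMod n)) else 1)
      (Finset.mem_univ j)
    simpa using this
  exact isUnit_of_dvd_unit hdvd hunit

end Forward

lemma exists_corrector (m : ℕ) (B C : Matrix (Fin (m+1)) (Fin (m+1)) ℤ)
    (hB : ∀ i j : Fin (m+1), j < i → B i j = 0)
    (hchain : ∀ i j : Fin (m+1), i ≤ j → C i i ∣ C j j)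
    (dd ss : ℕ → ℤ) (t : ℤ) (q : ℕ)
    (hdd : ∀ i : Fin (m+1), C i i ∣ dd (i:ℕ) - B i i)
    (hssC : ∀ (n : ℕ) (h : n < m+1), ss n = C ⟨n,h⟩ ⟨n,h⟩)
    (htC : ∀ i : Fin (m+1), (i:ℕ) = 0 → C i i ∣ t)
    (hl : ∀ i k : Fin (m+1), i < k → ∃ l : ℤ, C i i ∣ l * dd (k:ℕ) - B i k) :
    ∃ L : Matrix (Fin (m+1)) (Fin (m+1)) ℤ, L.det = 1 ∧
      ∀ i k : Fin (m+1), C i i ∣ (L * tmpl (m+1) dd ss t q) i k - B i k := by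
  classical
  set M₀ : Matrix (Fin (m+1)) (Fin (m+1)) ℤ := tmpl (m+1) dd ss t q with hM₀
  set L : Matrix (Fin (m+1)) (Fin (m+1)) ℤ := Matrix.of (fun i k =>
    if i = k then 1 else if h : i < k then (hl i k h).choose else 0) with hL
  have hdetL : L.det = 1 := by
    have htri : L.BlockTriangular id := by
      intro a b' hab'
      simp only [id_eq] at hab'
      simp only [hL, Matrix.of_apply]
      rw [if_neg hab'.ne', dif_neg (not_lt.2 hab'.le)]
    rw [Matrix.det_of_upperTriangular htri]
    apply Finset.prod_eq_one
    intro a _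
    simp [hL]
  refine ⟨L, hdetL, ?_⟩
  intro i k
  rw [Matrix.mul_apply]
  set T : Fin (m+1) → ℤ := fun j => if j = i then (if i = k then B i k else 0)
    else (if i < j ∧ j = k then B i k else 0) with hT
  have hsum : ∑ j, T j = B i k := by
    rcases lt_trichotomy i k with h | h | h
    · have h1 : ∀ b ∈ Finset.univ, b ≠ k → T b = 0 := by
        intro b _ hb
        simp only [hT]
        by_cases hbi : b = i
        · rw [if_pos hbi, if_neg h.ne]
        · rw [if_neg hbi, if_neg (fun hc => hb hc.2)]
      rw [Finset.sum_eq_single_of_mem k (Finset.mem_univ k) h1]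
      simp [hT, h.ne', h]
    · have h1 : ∀ b ∈ Finset.univ, b ≠ i → T b = 0 := by
        intro b _ hb
        simp only [hT]
        rw [if_neg hb, if_neg (fun hc : i < b ∧ b = k => hb (hc.2.trans h.symm))]
      rw [Finset.sum_eq_single_of_mem i (Finset.mem_univ i) h1]
      simp [hT, h]
    · have h1 : ∀ b ∈ Finset.univ, T b = 0 := by
        intro b _
        simp only [hT]
        by_cases hbi : b = i
        · rw [if_pos hbi, if_neg h.ne']
        · rw [if_neg hbi, if_neg (fun hc : i < b ∧ b = k => absurd (hc.2 ▸ hc.1) (not_lt.2 h.le))]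
      rw [Finset.sum_eq_zero h1]
      exact (hB i k h).symm
  have hsplit2 : (∑ j, L i j * M₀ j k) - B i k = ∑ j, (L i j * M₀ j k - T j) := by
    rw [Finset.sum_sub_distrib, hsum]
  rw [hsplit2]
  apply Finset.dvd_sum
  intro j _
  by_cases hj : j = i
  · subst hj
    have hLjj : L j j = 1 := by simp [hL]
    rw [hLjj, one_mul]
    simp only [hT, if_pos rfl]
    have hexp : M₀ j k = (if (j:ℕ) = (k:ℕ) then dd (j:ℕ) else 0)
        + (if (j:ℕ) = (k:ℕ) + 1 then ss (j:ℕ) else 0)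
        + (if (j:ℕ) = 0 ∧ (k:ℕ) = q then t else 0) := by
      simp only [hM₀, tmpl, Matrix.of_apply]
    rw [hexp]
    have hres : (if (j:ℕ) = (k:ℕ) then dd (j:ℕ) else 0)
        + (if (j:ℕ) = (k:ℕ) + 1 then ss (j:ℕ) else 0)
        + (if (j:ℕ) = 0 ∧ (k:ℕ) = q then t else 0) - (if j = k then B j k else 0)
        = ((if (j:ℕ) = (k:ℕ) then dd (j:ℕ) else 0) - (if j = k then B j k else 0))
        + (if (j:ℕ) = (k:ℕ) + 1 then ss (j:ℕ) else 0)
        + (if (j:ℕ) = 0 ∧ (k:ℕ) = q then t else 0) := by ring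
    rw [hres]
    apply dvd_add
    apply dvd_add
    · by_cases hjk : j = k
      · rw [if_pos (by rw [hjk]), if_pos hjk, ← hjk]
        exact hdd j
      · rw [if_neg (fun h => hjk (Fin.ext h)), if_neg hjk]
        simp
    · by_cases hc : (j:ℕ) = (k:ℕ) + 1
      · rw [if_pos hc, hssC (j:ℕ) j.isLt]
      · rw [if_neg hc]; exact dvd_zero _
    · by_cases hc : (j:ℕ) = 0 ∧ (k:ℕ) = q
      · rw [if_pos hc]
        exact htC j hc.1
      · rw [if_neg hc]; exact dvd_zero _
  · have hLij : L i j = if h : i < j then (hl i j h).choose else 0 := by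
      simp only [hL, Matrix.of_apply]
      rw [if_neg (fun h => hj h.symm)]
    by_cases hij : i < j
    · rw [hLij, dif_pos hij]
      simp only [hT, if_neg hj]
      have hjne0 : ¬((j:ℕ) = 0 ∧ (k:ℕ) = q) := by
        intro hc
        have : (i:ℕ) < (j:ℕ) := hij
        omega
      have hexp : M₀ j k = (if (j:ℕ) = (k:ℕ) then dd (j:ℕ) else 0)
          + (if (j:ℕ) = (k:ℕ) + 1 then ss (j:ℕ) else 0) := by
        simp only [hM₀, tmpl, Matrix.of_apply]
        rw [if_neg hjne0]
        ring
      rw [hexp]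
      have hres : (hl i j hij).choose * ((if (j:ℕ) = (k:ℕ) then dd (j:ℕ) else 0)
          + (if (j:ℕ) = (k:ℕ) + 1 then ss (j:ℕ) else 0))
          - (if i < j ∧ j = k then B i k else 0)
          = ((hl i j hij).choose * (if (j:ℕ) = (k:ℕ) then dd (j:ℕ) else 0)
             - (if i < j ∧ j = k then B i k else 0))
          + (hl i j hij).choose * (if (j:ℕ) = (k:ℕ) + 1 then ss (j:ℕ) else 0) := by ring
      rw [hres]
      apply dvd_add
      · by_cases hjk : j = k
        · rw [if_pos (show (j:ℕ) = (k:ℕ) from by rw [hjk]), if_pos ⟨hij, hjk⟩, ← hjk]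
          exact (hl i j hij).choose_spec
        · rw [if_neg (fun h => hjk (Fin.ext h)), if_neg (fun hc : i < j ∧ j = k => hjk hc.2)]
          simp
      · by_cases hc : (j:ℕ) = (k:ℕ) + 1
        · rw [if_pos hc, hssC (j:ℕ) j.isLt]
          exact Dvd.dvd.mul_left (hchain i j hij.le) _
        · rw [if_neg hc]
          simp
    · rw [hLij, dif_neg hij]
      simp only [hT, if_neg hj, zero_mul]
      rw [if_neg (fun hc => hij hc.1)]
      simp

section Backward

lemma bwd_exists (m : ℕ) (B C : Matrix (Fin (m+1)) (Fin (m+1)) ℤ)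
    (hB : ∀ i j : Fin (m+1), j < i → B i j = 0)
    (hCdiag : ∀ i j : Fin (m+1), i ≠ j → C i j = 0)
    (hchain : ∀ i j : Fin (m+1), i ≤ j → C i i ∣ C j j)
    (ε : ℤ) (hε : ε = 1 ∨ ε = -1)
    (i0 : Fin (m+1)) (hi0 : (i0 : ℕ) = 0)
    (hdetB : B.det ≡ ε [ZMOD C i0 i0])
    (hgcd : ∀ j : Fin (m+1), Int.gcd (B j j) (C j j) = 1) :
    ∃ N : Matrix (Fin (m+1)) (Fin (m+1)) ℤ, IsUnit (B + C * N) := by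
  have hεu : IsUnit ε := Int.isUnit_iff.2 hε
  -- reduce to finding a suitable unimodular M
  suffices h : ∃ M : Matrix (Fin (m+1)) (Fin (m+1)) ℤ,
      IsUnit M ∧ ∀ i j : Fin (m+1), C i i ∣ M i j - B i j by
    obtain ⟨M, hM1, hM2⟩ := h
    refine ⟨Matrix.of (fun i j => (M i j - B i j) / (C i i)), ?_⟩
    have : B + C * Matrix.of (fun i j => (M i j - B i j) / (C i i)) = M := by
      ext i j
      rw [Matrix.add_apply, CN_entry _ _ hCdiag]
      simp only [Matrix.of_apply]
      rw [Int.mul_ediv_cancel' (hM2 i j)]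
      ring
    rw [this]; exact hM1
  by_cases hc0 : C i0 i0 = 0
  · -- all moduli are zero below row i0...  here B itself works
    refine ⟨B, ?_, fun i j => ⟨0, by ring⟩⟩
    have hBdet : B.det = ε := by
      rw [hc0] at hdetB
      simpa [Int.ModEq] using hdetB
    rw [Matrix.isUnit_iff_isUnit_det, hBdet]
    exact hεu
  · -- main case : C i0 i0 ≠ 0
    classical
    -- the largest index with nonzero diagonal in C
    set S : Finset (Fin (m+1)) := Finset.univ.filter (fun i => C i i ≠ 0) with hS
    have hSne : S.Nonempty := ⟨i0, by simp [hS, hc0]⟩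
    set Qf : Fin (m+1) := S.max' hSne with hQf
    have hQmem : Qf ∈ S := S.max'_mem hSne
    have hQne : C Qf Qf ≠ 0 := by
      have := hQmem; rw [hS, Finset.mem_filter] at this; exact this.2
    have hle : ∀ i : Fin (m+1), C i i ≠ 0 → i ≤ Qf := by
      intro i hi; exact S.le_max' i (by simp [hS, hi])
    have hnz : ∀ i : Fin (m+1), i ≤ Qf → C i i ≠ 0 := by
      intro i hi h0
      exact hQne (zero_dvd_iff.1 (h0 ▸ hchain i Qf hi))
    have hzero : ∀ i : Fin (m+1), Qf < i → C i i = 0 := by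
      intro i hi
      by_contra h0
      exact absurd (hle i h0) (not_le.2 hi)
    have hunit_b : ∀ i : Fin (m+1), Qf < i → B i i = 1 ∨ B i i = -1 := by
      intro i hi
      have := hgcd i
      rw [hzero i hi, Int.gcd_zero_right] at this
      rcases Int.natAbs_eq (B i i) with h | h
      · left; omega
      · right; omega
    -- lift the diagonal entries to integers coprime to C Qf Qf
    have hlift : ∀ i : Fin (m+1), i ≤ Qf →
        ∃ b', b' ≡ B i i [ZMOD C i i] ∧ Int.gcd b' (C Qf Qf) = 1 :=
      fun i hi => exists_lift_coprime _ _ _ (hgcd i) (hchain i Qf hi) hQne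
    set bp : Fin (m+1) → ℤ :=
      fun i => if h : i ≤ Qf then (hlift i h).choose else B i i with hbp
    have hbp_mod : ∀ i : Fin (m+1), bp i ≡ B i i [ZMOD C i i] := by
      intro i
      simp only [hbp]
      by_cases h : i ≤ Qf
      · rw [dif_pos h]; exact (hlift i h).choose_spec.1
      · rw [dif_neg h]
    have hbp_gcd : ∀ i : Fin (m+1), i ≤ Qf → Int.gcd (bp i) (C Qf Qf) = 1 := by
      intro i h
      simp only [hbp]
      rw [dif_pos h]
      exact (hlift i h).choose_spec.2
    have hbp_eq : ∀ i : Fin (m+1), Qf < i → bp i = B i i := by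
      intro i h; simp only [hbp]; rw [dif_neg (not_le.2 h)]
    have hbp_pm : ∀ i : Fin (m+1), Qf < i → bp i = 1 ∨ bp i = -1 := by
      intro i h; rw [hbp_eq i h]; exact hunit_b i h
    have hbp_cop : ∀ k : Fin (m+1), ∀ z : ℤ, z ∣ C Qf Qf → IsCoprime (bp k) z := by
      intro k z hz
      by_cases hk : k ≤ Qf
      · have h1 : IsCoprime (bp k) (C Qf Qf) :=
          Int.isCoprime_iff_gcd_eq_one.2 (hbp_gcd k hk)
        obtain ⟨w, hw⟩ := hz
        obtain ⟨u, v, huv⟩ := h1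
        exact ⟨u, v * w, by rw [hw] at huv; linarith [huv]⟩
      · rcases hbp_pm k (not_le.1 hk) with h | h
        · exact ⟨1, 0, by rw [h]; ring⟩
        · exact ⟨-1, 0, by rw [h]; ring⟩
    set q : ℕ := (Qf : ℕ) with hq
    have hqm : q < m + 1 := Qf.isLt
    -- ℕ-indexed versions of the data
    set bb : ℕ → ℤ := fun n => if h : n < m+1 then bp ⟨n, h⟩ else 1 with hbb
    set ss : ℕ → ℤ := fun n => if h : n < m+1 then C ⟨n, h⟩ ⟨n, h⟩ else 0 with hss
    set bnat : ℕ → ℤ := fun n => if h : n < m+1 then B ⟨n, h⟩ ⟨n, h⟩ else 1 with hbnat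
    set δ : ℤ := ∏ i ∈ Ioo q (m+1), bb i with hδ
    set P : ℤ := ∏ i ∈ Icc 1 q, bb i with hP
    set Qp : ℤ := ∏ i ∈ Icc 1 q, ss i with hQp
    have hfinle : ∀ (n : ℕ) (h : n < m+1), n ≤ q → (⟨n, h⟩ : Fin (m+1)) ≤ Qf := by
      intro n h hn; exact hn
    have hfingt : ∀ (n : ℕ) (h : n < m+1), q < n → Qf < (⟨n, h⟩ : Fin (m+1)) := by
      intro n h hn; exact hn
    have hδ2 : δ * δ = 1 := by
      rw [hδ, ← Finset.prod_mul_distrib]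
      apply Finset.prod_eq_one
      intro i hi
      obtain ⟨h1, h2⟩ := Finset.mem_Ioo.1 hi
      simp only [hbb]
      rw [dif_pos h2]
      rcases hbp_pm ⟨i, h2⟩ (hfingt i h2 h1) with h | h <;> rw [h] <;> ring
    have hPQ : IsCoprime P Qp := by
      rw [hP, hQp]
      apply IsCoprime.prod_left
      intro i hi
      apply IsCoprime.prod_right
      intro k hk
      obtain ⟨hi1, hi2⟩ := Finset.mem_Icc.1 hi
      obtain ⟨hk1, hk2⟩ := Finset.mem_Icc.1 hk
      have hilt : i < m + 1 := by omega
      have hklt : k < m + 1 := by omega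
      simp only [hbb, hss]
      rw [dif_pos hilt, dif_pos hklt]
      exact hbp_cop _ _ (hchain ⟨k, hklt⟩ Qf (hfinle k hklt hk2))
    -- splitting products over `range (m+1)`
    have hsplit : ∀ f : ℕ → ℤ, ∏ n ∈ range (m+1), f n
        = f 0 * ((∏ n ∈ Icc 1 q, f n) * ∏ n ∈ Ioo q (m+1), f n) := by
      intro f
      have h2 : (∏ n ∈ Icc 1 q, f n) * ∏ n ∈ Ioo q (m+1), f n = ∏ n ∈ Ico 1 (m+1), f n := by
        rw [← Finset.Ico_add_one_right_eq_Icc, ← Finset.Ico_add_one_left_eq_Ioo]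
        exact Finset.prod_Ico_consecutive f (by omega) (by omega)
      rw [h2, Finset.range_eq_Ico,
        ← Finset.prod_Ico_consecutive f (by omega : (0:ℕ) ≤ 1) (by omega : 1 ≤ m+1)]
      congr 1
      rw [show Finset.Ico 0 1 = {0} from rfl, Finset.prod_singleton]
    -- determinant of B
    have hdetBprod : B.det = ∏ n ∈ range (m+1), bnat n := by
      have h1 : B.det = ∏ i : Fin (m+1), B i i :=
        Matrix.det_of_upperTriangular (by intro i j hij; exact hB i j hij)
      rw [h1, ← Fin.prod_univ_eq_prod_range]
      apply Finset.prod_congr rfl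
      intro i _
      simp only [hbnat]
      rw [dif_pos i.isLt]
    -- key divisibility for Bezout
    have hb0E : bnat 0 = B i0 i0 := by
      simp only [hbnat]
      rw [dif_pos (by omega : 0 < m+1)]
      congr 1 <;> exact (Fin.ext (by simp [hi0])).symm
    have hc0E : ∀ (h : (0:ℕ) < m+1), C ⟨0,h⟩ ⟨0,h⟩ = C i0 i0 := by
      intro h; congr 1 <;> exact Fin.ext (by simp [hi0])
    set n0 : ℕ := (C i0 i0).natAbs with hn0
    have hcast_eq : ∀ n ∈ Icc 1 q, ((bnat n : ZMod n0)) = ((bb n : ZMod n0)) := by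
      intro n hn
      obtain ⟨h1, h2⟩ := Finset.mem_Icc.1 hn
      have hlt : n < m + 1 := by omega
      simp only [hbnat, hbb]
      rw [dif_pos hlt, dif_pos hlt, intCast_zmod_eq_iff]
      have := hbp_mod ⟨n, hlt⟩
      have hdvd : C i0 i0 ∣ C ⟨n, hlt⟩ ⟨n, hlt⟩ := hchain i0 ⟨n, hlt⟩ (by
        show (i0 : ℕ) ≤ n; omega)
      exact (Int.ModEq.of_dvd hdvd this).symm
    have hcast_eq2 : ∀ n ∈ Ioo q (m+1), bnat n = bb n := by
      intro n hn
      obtain ⟨h1, h2⟩ := Finset.mem_Ioo.1 hn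
      simp only [hbnat, hbb]
      rw [dif_pos h2, dif_pos h2, hbp_eq ⟨n, h2⟩ (hfingt n h2 h1)]
    have hKdvd : C i0 i0 ∣ ε * δ - B i0 i0 * P := by
      have h1 : (B.det : ZMod n0) = (ε : ZMod n0) := (intCast_zmod_eq_iff _ _ _).2 hdetB
      rw [hdetBprod, hsplit bnat] at h1
      have h2 : ((∏ n ∈ Icc 1 q, bnat n : ℤ) : ZMod n0) = ((P : ℤ) : ZMod n0) := by
        rw [hP]
        push_cast
        exact Finset.prod_congr rfl hcast_eq
      have h3 : (∏ n ∈ Ioo q (m+1), bnat n) = δ := by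
        rw [hδ]; exact Finset.prod_congr rfl hcast_eq2
      rw [h3] at h1
      push_cast at h1
      rw [hb0E] at h1
      have h4 : ((ε * δ - B i0 i0 * P : ℤ) : ZMod n0) = 0 := by
        have hδ2' : ((δ : ZMod n0)) * ((δ : ZMod n0)) = 1 := by
          have := congrArg (fun z : ℤ => (z : ZMod n0)) hδ2
          push_cast at this
          exact this
        have hPc : ((P : ℤ) : ZMod n0) = ∏ i ∈ Icc 1 q, ((bnat i : ℤ) : ZMod n0) := by
          rw [hP]
          push_cast
          exact (Finset.prod_congr rfl hcast_eq).symm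
        push_cast
        rw [hPc]
        linear_combination (-(δ : ZMod n0)) * h1
          + ((B i0 i0 : ZMod n0) * ∏ i ∈ Icc 1 q, ((bnat i : ℤ) : ZMod n0)) * hδ2'
      rw [ZMod.intCast_zmod_eq_zero_iff_dvd] at h4
      exact Int.natAbs_dvd.1 h4
    obtain ⟨K, hK⟩ := hKdvd
    obtain ⟨u, v, huv⟩ := hPQ
    set x : ℤ := u * K with hx
    set y : ℤ := (-1)^q * (v * K) with hy
    set t : ℤ := C i0 i0 * y with ht
    set dd : ℕ → ℤ := fun n => if n = 0 then B i0 i0 + C i0 i0 * x else bb n with hdd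
    set M₀ : Matrix (Fin (m+1)) (Fin (m+1)) ℤ := tmpl (m+1) dd ss t q with hM₀
    have d0 : dd 0 = B i0 i0 + C i0 i0 * x := by
      simp only [hdd]
      simp
    have hdet0 : M₀.det = ε := by
      rw [hM₀, det_tmpl (m+1) (by omega) dd ss t q hqm]
      have dIcc : ∏ n ∈ Icc 1 q, dd n = P := by
        rw [hP]
        apply Finset.prod_congr rfl
        intro n hn
        obtain ⟨h1, h2⟩ := Finset.mem_Icc.1 hn
        simp only [hdd]
        rw [if_neg (by omega)]
      have e2 : ∏ n ∈ Ioo q (m+1), dd n = δ := by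
        rw [hδ]
        apply Finset.prod_congr rfl
        intro n hn
        obtain ⟨h1, h2⟩ := Finset.mem_Ioo.1 hn
        simp only [hdd]
        rw [if_neg (by omega)]
      rw [hsplit dd, d0, dIcc, e2, ← hQp]
      have h4q : ((-1:ℤ))^q * ((-1:ℤ))^q = 1 := by
        rw [← pow_add]; exact Even.neg_one_pow ⟨q, rfl⟩
      rw [ht, hy, hx]
      linear_combination (C i0 i0 * v * K * Qp * δ) * h4q
        + (C i0 i0 * K * δ) * huv - δ * hK + ε * hδ2
    -- invoke the corrector lemma
    have hdd2 : ∀ i : Fin (m+1), C i i ∣ dd (i:ℕ) - B i i := by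
      intro i
      by_cases h0 : (i:ℕ) = 0
      · have hji0 : i = i0 := Fin.ext (by omega)
        have : dd (i:ℕ) = B i0 i0 + C i0 i0 * x := by rw [h0]; exact d0
        rw [this, hji0]
        exact ⟨x, by ring⟩
      · have : dd (i:ℕ) = bp i := by
          simp only [hdd, hbb]
          rw [if_neg h0, dif_pos i.isLt]
        rw [this]
        exact Int.ModEq.dvd ((hbp_mod i).symm)
    have hssC2 : ∀ (n : ℕ) (h : n < m+1), ss n = C ⟨n,h⟩ ⟨n,h⟩ := by
      intro n h
      simp only [hss]
      rw [dif_pos h]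
    have htC2 : ∀ i : Fin (m+1), (i:ℕ) = 0 → C i i ∣ t := by
      intro i h0
      have hji0 : i = i0 := Fin.ext (by omega)
      rw [hji0, ht]
      exact Dvd.intro y rfl
    have hl : ∀ i k : Fin (m+1), i < k → ∃ l : ℤ, C i i ∣ l * dd (k:ℕ) - B i k := by
      intro i k hik
      have hcop : IsCoprime (bp k) (C i i) := by
        by_cases hi : i ≤ Qf
        · exact hbp_cop k (C i i) (hchain i Qf hi)
        · rw [hzero i (not_le.1 hi)]
          rcases hbp_pm k (lt_trans (not_le.1 hi) hik) with h | h
          · exact ⟨1, 0, by rw [h]; ring⟩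
          · exact ⟨-1, 0, by rw [h]; ring⟩
      obtain ⟨a, c, hac⟩ := hcop
      have hkne0 : (k:ℕ) ≠ 0 := by
        have : (i:ℕ) < (k:ℕ) := hik
        omega
      have hbbk : dd (k:ℕ) = bp k := by
        simp only [hdd, hbb]
        rw [if_neg hkne0, dif_pos k.isLt]
      refine ⟨a * B i k, -(B i k) * c, ?_⟩
      rw [hbbk]
      linear_combination (B i k) * hac
    obtain ⟨L, hdetL, hLdvd⟩ := exists_corrector m B C hB hchain dd ss t q hdd2 hssC2 htC2 hl
    refine ⟨L * M₀, ?_, ?_⟩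
    · rw [Matrix.isUnit_iff_isUnit_det, Matrix.det_mul, hdetL, one_mul, hdet0]
      exact hεu
    · rw [hM₀]
      exact hLdvd

end Backward


/-- Lemma `unim` of Section 5: for `B` upper triangular and `C` in Smith normal form,
there is an integer matrix `N` with `B + C·N` invertible over `ℤ` iff
`det B ≡ ±1` modulo `c₁` and `gcd(bⱼ, cⱼ) = 1` for every `j`. -/
theorem lemma_unim (p : ℕ) (hp : 1 ≤ p)
    (B C : Matrix (Fin p) (Fin p) ℤ)
    (hB : ∀ i j : Fin p, j < i → B i j = 0)
    (hCdiag : ∀ i j : Fin p, i ≠ j → C i j = 0)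
    (hCdvd : ∀ i : Fin p, ∀ h : (i : ℕ) + 1 < p,
      C i i ∣ C ⟨(i : ℕ) + 1, h⟩ ⟨(i : ℕ) + 1, h⟩) :
    (∃ N : Matrix (Fin p) (Fin p) ℤ, IsUnit (B + C * N)) ↔
      ((B.det ≡ 1 [ZMOD C ⟨0, hp⟩ ⟨0, hp⟩] ∨ B.det ≡ -1 [ZMOD C ⟨0, hp⟩ ⟨0, hp⟩]) ∧
        ∀ j : Fin p, Int.gcd (B j j) (C j j) = 1) := by
  have hchain : ∀ i j : Fin p, i ≤ j → C i i ∣ C j j := by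
    have key : ∀ (n : ℕ) (h : n < p), ∀ i : Fin p, (i:ℕ) ≤ n → C i i ∣ C ⟨n,h⟩ ⟨n,h⟩ := by
      intro n
      induction n with
      | zero =>
        intro h i hi
        have : i = ⟨0, h⟩ := Fin.ext (show (i:ℕ) = 0 by omega)
        rw [this]
      | succ n ih =>
        intro h i hi
        by_cases hc : (i:ℕ) ≤ n
        · exact (ih (by omega) i hc).trans (hCdvd ⟨n, by omega⟩ h)
        · have : i = ⟨n+1, h⟩ := Fin.ext (show (i:ℕ) = n+1 by omega)
          rw [this]
    intro i j hij
    have := key (j:ℕ) j.isLt i hij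
    simpa using this
  constructor
  · rintro ⟨N, hN⟩
    constructor
    · have hmod := fwd_det_modEq B C N hCdiag (C ⟨0,hp⟩ ⟨0,hp⟩)
        (fun i => hchain ⟨0,hp⟩ i (by simp [Fin.le_def]))
      have hdet : IsUnit (B + C * N).det := (Matrix.isUnit_iff_isUnit_det _).1 hN
      rcases Int.isUnit_iff.1 hdet with h | h
      · left; rw [h] at hmod; exact hmod
      · right; rw [h] at hmod; exact hmod
    · intro j
      exact fwd_gcd B C N hB hCdiag hchain hN j
  · rintro ⟨hdet, hgcd⟩
    obtain ⟨m, rfl⟩ : ∃ m, p = m + 1 := ⟨p - 1, by omega⟩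
    rcases hdet with h | h
    · exact bwd_exists m B C hB hCdiag hchain 1 (Or.inl rfl) ⟨0,hp⟩ rfl h hgcd
    · exact bwd_exists m B C hB hCdiag hchain (-1) (Or.inr rfl) ⟨0,hp⟩ rfl h hgcd
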